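/- arXiv:1711.03724 — 2 statements merged into one kernel-verified Lean document; each statement's English description precedes it below -/
import Mathlib

section
/- Let (c₁,…,c_m) ∈ ℤ^m be a quiddity cycle with m > 3. Then there exist two indices j, k ∈ {1,…,m} with |j−k| > 1 and {j,k} ≠ {1,m} such that |c_j| < 2 and |c_k| < 2 (i.e. c_j, c_k ∈ {−1, 0, 1}). -/
/-!
Multiplying by `η(a)` with `|a| ≥ 2` on the left makes the first column of a product of
`η`-matrices grow, so a product of `n` such factors has `(0,0)` entry of absolute value at
least `n + 1`. If no two small entries of the cycle were cyclically non-adjacent, all small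
entries would lie in one cyclically adjacent pair; since `-1` is central, the cycle may be
rotated so that this pair comes last. The first `m - 2 ≥ 2` factors, all big, would then
multiply to `-(η(a) η(b))⁻¹`, whose `(0,0)` entry is `1`.
-/

/-- The matrix `η(c) = !![c, -1; 1, 0]` over `ℤ`. -/
def etaZ (c : ℤ) : Matrix (Fin 2) (Fin 2) ℤ := !![c, -1; 1, 0]

theorem mul_eq_neg_one_comm {R : Type*} [Ring R] [IsDedekindFiniteMonoid R] {a b : R}
    (h : a * b = -1) : b * a = -1 := by
  have : b * -a = 1 := mul_eq_one_comm.mp (by rw [neg_mul, h, neg_neg])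
  rw [← neg_neg (b * a), ← mul_neg, this]

theorem List.prod_rotate_eq_neg_one {R : Type*} [Ring R] [IsDedekindFiniteMonoid R]
    {l : List R} (hl : l.prod = -1) (n : ℕ) : (l.rotate n).prod = -1 := by
  rw [List.rotate_eq_drop_append_take_mod, List.prod_append]
  apply mul_eq_neg_one_comm
  rwa [← List.prod_append, List.take_append_drop]

theorem List.rotate_range (m n : ℕ) :
    (List.range m).rotate n = (List.range m).map (fun i => (i + n) % m) := by
  apply List.ext_getElem (by simp)
  intro i _ _
  simp [List.getElem_rotate]

theorem etaZ_mul_apply_zero_zero (a : ℤ) (M : Matrix (Fin 2) (Fin 2) ℤ) :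
    (etaZ a * M) 0 0 = a * M 0 0 - M 1 0 := by
  simp [etaZ, Matrix.mul_apply, Fin.sum_univ_two]
  ring

theorem etaZ_mul_apply_one_zero (a : ℤ) (M : Matrix (Fin 2) (Fin 2) ℤ) :
    (etaZ a * M) 1 0 = M 0 0 := by
  simp [etaZ, Matrix.mul_apply, Fin.sum_univ_two]

theorem length_add_one_le_abs_prod_etaZ_apply_zero_zero (l : List ℤ)
    (hl : ∀ a ∈ l, 2 ≤ |a|) :
    (l.length : ℤ) + 1 ≤ |(l.map etaZ).prod 0 0| ∧
      |(l.map etaZ).prod 1 0| < |(l.map etaZ).prod 0 0| := by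
  induction l with
  | nil => simp
  | cons a l ih =>
    obtain ⟨ih₁, ih₂⟩ := ih fun b hb => hl b (List.mem_cons_of_mem a hb)
    have ha : 2 ≤ |a| := hl a List.mem_cons_self
    set M := (l.map etaZ).prod
    have hrev : |a| * |M 0 0| - |M 1 0| ≤ |a * M 0 0 - M 1 0| := by
      rw [← abs_mul]
      exact abs_sub_abs_le_abs_sub _ _
    simp only [List.map_cons, List.prod_cons, etaZ_mul_apply_zero_zero, etaZ_mul_apply_one_zero,
      List.length_cons]
    push_cast
    constructor <;> nlinarith [abs_nonneg (M 1 0)]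

theorem apply_zero_zero_eq_one_of_mul_etaZ_mul_etaZ_eq_neg_one
    {P : Matrix (Fin 2) (Fin 2) ℤ} {a b : ℤ} (h : P * etaZ a * etaZ b = -1) : P 0 0 = 1 := by
  have h₀₀ := congrFun (congrFun h 0) 0
  have h₀₁ := congrFun (congrFun h 0) 1
  simp [etaZ, Matrix.mul_apply, Fin.sum_univ_two] at h₀₀ h₀₁
  linear_combination -h₀₀ - b * h₀₁

theorem prod_etaZ_append_ne_neg_one {l : List ℤ} (hne : l ≠ []) (hl : ∀ a ∈ l, 2 ≤ |a|)
    (a b : ℤ) : ((l ++ [a, b]).map etaZ).prod ≠ -1 := by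
  intro h
  have h₁ : (l.map etaZ).prod 0 0 = 1 := by
    apply apply_zero_zero_eq_one_of_mul_etaZ_mul_etaZ_eq_neg_one (a := a) (b := b)
    simpa [mul_assoc] using h
  have hgrowth := (length_add_one_le_abs_prod_etaZ_apply_zero_zero l hl).1
  rw [h₁, abs_one] at hgrowth
  have : l.length ≠ 0 := by simpa using hne
  omega

theorem one_lt_abs_natCast_sub_of_add_one_lt {j k : ℕ} (h : j + 1 < k) :
    1 < |(j : ℤ) - (k : ℤ)| := by
  rw [lt_abs]
  omega

/-- The positions `r + 1, …, r + m - 2` taken cyclically in `{1, …, m}` miss `S`. -/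
theorem exists_cyclic_window_avoiding {m : ℕ} (hm : 3 < m) {S : ℕ → Prop}
    (hS : ∀ j k : ℕ, 1 ≤ j → j ≤ m → 1 ≤ k → k ≤ m → 1 < |(j : ℤ) - (k : ℤ)| →
      ¬((j = 1 ∧ k = m) ∨ (j = m ∧ k = 1)) → S j → ¬S k) :
    ∃ r, ∀ i < m - 2, ¬S ((i + r) % m + 1) := by
  classical
  by_cases hends : S 1 ∧ S m
  · refine ⟨1, fun i hi hSi => ?_⟩
    rw [Nat.mod_eq_of_lt (by omega)] at hSi
    rcases Nat.eq_zero_or_pos i with rfl | hi₀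
    · exact hS 2 m (by omega) (by omega) (by omega) le_rfl
        (one_lt_abs_natCast_sub_of_add_one_lt (by omega)) (by omega) hSi hends.2
    · exact hS 1 (i + 2) le_rfl (by omega) (by omega) (by omega)
        (one_lt_abs_natCast_sub_of_add_one_lt (by omega)) (by omega) hends.1 hSi
  by_cases hsmall : ∃ s, 1 ≤ s ∧ s ≤ m ∧ S s
  · obtain ⟨hs₁, hsm, hSs⟩ := Nat.find_spec hsmall
    refine ⟨Nat.find hsmall + 1, fun i hi hSt => ?_⟩
    rcases lt_or_ge (i + (Nat.find hsmall + 1)) m with hlt | hge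
    · rw [Nat.mod_eq_of_lt hlt] at hSt
      refine hS _ _ hs₁ hsm (by omega) (by omega)
        (one_lt_abs_natCast_sub_of_add_one_lt (by omega)) ?_ hSs hSt
      rintro (⟨hs, ht⟩ | ⟨hs, ht⟩)
      · exact hends ⟨hs ▸ hSs, ht ▸ hSt⟩
      · omega
    · rw [Nat.mod_eq_sub_mod hge, Nat.mod_eq_of_lt (by omega)] at hSt
      exact Nat.find_min hsmall (by omega) ⟨by omega, by omega, hSt⟩
  · push Not at hsmall
    exact ⟨0, fun i _ => hsmall _ (by omega) (Nat.mod_lt _ (by omega))⟩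

/-- For a quiddity cycle `(c₁, …, c_m)` over `ℤ` with `m > 3` there are indices
`j, k ∈ {1, …, m}` with `|j − k| > 1`, `{j, k} ≠ {1, m}`, `|c_j| < 2` and `|c_k| < 2`. -/
theorem stmt18 (m : ℕ) (hm : 3 < m) (c : ℕ → ℤ)
    (hq : ((List.range m).map (fun k => etaZ (c (k + 1)))).prod = -1) :
    ∃ j k : ℕ, 1 ≤ j ∧ j ≤ m ∧ 1 ≤ k ∧ k ≤ m ∧
      1 < |(j : ℤ) - (k : ℤ)| ∧
      ¬((j = 1 ∧ k = m) ∨ (j = m ∧ k = 1)) ∧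
      |c j| < 2 ∧ |c k| < 2 := by
  by_contra hcon
  obtain ⟨r, hr⟩ := exists_cyclic_window_avoiding hm (S := fun t => |c t| < 2)
    fun j k hj hjm hk hkm hjk hend hcj hck => hcon ⟨j, k, hj, hjm, hk, hkm, hjk, hend, hcj, hck⟩
  have hrot : ((((List.range m).map fun k => c (k + 1)).rotate r).map etaZ).prod = -1 := by
    rw [List.map_rotate, List.map_map]
    exact List.prod_rotate_eq_neg_one hq r
  rw [← List.map_rotate, List.rotate_range, List.map_map (g := fun k => c (k + 1))] at hrot
  obtain ⟨n, rfl⟩ : ∃ n, m = n + 2 := ⟨m - 2, by omega⟩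
  rw [List.range_succ, List.range_succ, List.append_assoc, List.singleton_append, List.map_append,
    List.map_cons, List.map_singleton] at hrot
  refine prod_etaZ_append_ne_neg_one ?_ ?_ _ _ hrot
  · simp only [ne_eq, List.map_eq_nil_iff, List.range_eq_nil]
    omega
  · simp only [List.mem_map, List.mem_range, forall_exists_index, and_imp]
    rintro _ i hi rfl
    exact not_lt.mp (hr i (by omega))
end

section
/- Let (c₁,…,c_m) ∈ ℤ^m be a quiddity cycle. Then at least one of the following holds: (0) m < 4 and (c₁,…,c_m) is (0,0) or (1,1,1); (1) there is a cyclic rotation (d₁,…,d_m) of (c₁,…,c_m) and an index k with 2 ≤ k ≤ m−1 such that d_k = 1 and (d₁,…,d_{k−2}, d_{k−1}−1, d_{k+1}−1, d_{k+2},…,d_m) is a quiddity cycle of length m−1; (2) m is odd and there is a cyclic rotation (d₁,…,d_m) and an index k with 2 ≤ k ≤ m−1 such that d_k = 0 and (−d₁,…,−d_{k−2}, −d_{k−1}−d_{k+1}, −d_{k+2},…,−d_m) is a quiddity cycle of length m−2; (3) m is even and there is a cyclic rotation (d₁,…,d_m) and an index k with 2 ≤ k ≤ m−1 such that d_k = −1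 and (−d₁,…,−d_{k−2}, −d_{k−1}−1, −d_{k+1}−1, −d_{k+2},…,−d_m) is a quiddity cycle of length m−1; (4) there is a cyclic rotation (d₁,…,d_m) and indices j, k with 2 ≤ j < k ≤ m−1 and k−j > 1 such that d_j = d_k = 0 and: if k−j > 2 then (d₁,…,d_{j−2}, d_{j−1}+d_{j+1}, d_{j+2},…,d_{k−2}, d_{k−1}+d_{k+1}, d_{k+2},…,d_m) is a quiddity cycle of length m−4, while if k = j+2 then (d₁,…,d_{j−2}, d_{j−1}+d_{j+1}+d_{k+1}, d_{k+2},…,d_m) is a quiddity cycle of length m−4; (5) there is a cyclic rotation (d₁,…,d_m) and indices j, k with 2 ≤ j < k ≤ m−1 and k−j > 1 such that d_j = d_k = −1 and: if k−j > 2 then (d₁,…,d_{j−2}, d_{j−1}+1, d_{j+1}+1, d_{j+2},…,d_{k−2}, d_{k−1}+1, d_{k+1}+1, d_{k+2},…,d_m) is a quiddity cycle of length m−2, while if k = j+2 then (d₁,…,d_{j−2}, d_{j−1}+1, d_{j+1}+2, d_{k+1}+1, d_{k+2},…,d_m) is a quiddity cycle of length m−2. -/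
/-- A quiddity cycle over `ℤ`: a finite sequence `(c₁, …, c_m)` of integers, encoded as a
list, with `η(c₁) ⋯ η(c_m) = -I₂`. -/
def IsQuiddityZ (l : List ℤ) : Prop := (l.map etaZ).prod = -1

/-! ### Auxiliary development -/

/-- Product of the `η`-matrices of a list. -/
def Pq (l : List ℤ) : Matrix (Fin 2) (Fin 2) ℤ := (l.map etaZ).prod

lemma isQuiddityZ_iff (l : List ℤ) : IsQuiddityZ l ↔ Pq l = -1 := Iff.rfl

@[simp] lemma Pq_nil : Pq [] = 1 := rfl
@[simp] lemma Pq_cons (c : ℤ) (l : List ℤ) : Pq (c :: l) = etaZ c * Pq l := by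
  simp [Pq]
@[simp] lemma Pq_append (A B : List ℤ) : Pq (A ++ B) = Pq A * Pq B := by
  simp [Pq]

lemma etaZ_mul (a b : ℤ) : etaZ a * etaZ b = !![a*b-1, -a; b, -1] := by
  simp [etaZ, Matrix.mul_fin_two, sub_eq_add_neg]

lemma red_one (x y : ℤ) (L : List ℤ) : Pq (x :: 1 :: y :: L) = Pq ((x-1) :: (y-1) :: L) := by
  simp only [Pq_cons, ← mul_assoc]
  congr 1
  simp [etaZ, Matrix.mul_fin_two]; ring_nf; simp

lemma red_zero (x y : ℤ) (L : List ℤ) : Pq (x :: 0 :: y :: L) = -Pq ((x+y) :: L) := by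
  simp only [Pq_cons, ← mul_assoc, ← neg_mul]
  congr 1
  simp [etaZ, Matrix.mul_fin_two]

lemma red_negone (x y : ℤ) (L : List ℤ) :
    Pq (x :: (-1) :: y :: L) = -Pq ((x+1) :: (y+1) :: L) := by
  simp only [Pq_cons, ← mul_assoc, ← neg_mul]
  congr 1
  ext i j
  fin_cases i <;> fin_cases j <;> simp [etaZ, Matrix.mul_apply, Fin.sum_univ_two] <;> ring

lemma etaZ_zero_sq : etaZ 0 * etaZ 0 = -1 := by
  simp [etaZ, Matrix.mul_fin_two, Matrix.one_fin_two]

lemma red_zerozero (L : List ℤ) : Pq (0 :: 0 :: L) = -Pq L := by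
  rw [Pq_cons, Pq_cons, ← mul_assoc, etaZ_zero_sq, neg_one_mul]

lemma red_zero5 (x y z : ℤ) (L : List ℤ) :
    Pq (x :: 0 :: y :: 0 :: z :: L) = Pq ((x+y+z) :: L) := by
  rw [red_zero, red_zero, neg_neg]

lemma red_negone5 (x y z : ℤ) (L : List ℤ) :
    Pq (x :: (-1) :: y :: (-1) :: z :: L) = Pq ((x+1) :: (y+2) :: (z+1) :: L) := by
  rw [red_negone]
  have : Pq ((y+1) :: (-1) :: z :: L) = -Pq ((y+2) :: (z+1) :: L) := by
    rw [red_negone]; ring_nf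
  rw [Pq_cons, this, mul_neg, neg_neg]
  simp [mul_assoc]

lemma red_zero_two (x y x' y' : ℤ) (A B : List ℤ) :
    Pq (x :: 0 :: y :: (A ++ x' :: 0 :: y' :: B)) = Pq (((x+y) :: A) ++ (x'+y') :: B) := by
  rw [red_zero, Pq_cons, Pq_append, red_zero, Pq_append, Pq_cons]
  simp [mul_assoc]

lemma red_negone_two (x y x' y' : ℤ) (A B : List ℤ) :
    Pq (x :: (-1) :: y :: (A ++ x' :: (-1) :: y' :: B)) =
      Pq (((x+1) :: (y+1) :: A) ++ (x'+1) :: (y'+1) :: B) := by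
  rw [red_negone, Pq_cons, Pq_cons, Pq_append, red_negone, Pq_append, Pq_cons, Pq_cons]
  simp [mul_assoc]

lemma mul_neg_one_comm {X Y : Matrix (Fin 2) (Fin 2) ℤ} (h : X * Y = -1) : Y * X = -1 := by
  have h1 : (-X) * Y = 1 := by rw [neg_mul, h, neg_neg]
  have h2 : Y * (-X) = 1 := mul_eq_one_comm.mp h1
  rw [mul_neg] at h2
  exact neg_injective (by rw [h2, neg_neg])

lemma quiddity_rotate {l : List ℤ} (h : IsQuiddityZ l) (n : ℕ) : IsQuiddityZ (l.rotate n) := by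
  rcases eq_or_ne l [] with rfl | hl
  · simpa using h
  · rw [← List.rotate_mod]
    have hk : n % l.length ≤ l.length := le_of_lt (Nat.mod_lt _ (List.length_pos_iff.mpr hl))
    rw [List.rotate_eq_drop_append_take hk]
    show Pq _ = -1
    rw [Pq_append]
    apply mul_neg_one_comm
    have := List.take_append_drop (n % l.length) l
    have h2 : Pq l = -1 := h
    rw [← this, Pq_append] at h2
    exact h2

lemma rotate_append (A B : List ℤ) : (A ++ B).rotate A.length = B ++ A := by
  rw [List.rotate_eq_drop_append_take (by simp), List.drop_left, List.take_left]

lemma exists_rotate_mid {a : ℤ} {l : List ℤ} (ha : a ∈ l) (h3 : 3 ≤ l.length) :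
    ∃ n x y l₂, l.rotate n = x :: a :: y :: l₂ := by
  obtain ⟨A, B, rfl⟩ := List.append_of_mem ha
  rcases List.eq_nil_or_concat A with rfl | ⟨A', x, rfl⟩
  · rcases List.eq_nil_or_concat B with rfl | ⟨B', x, rfl⟩
    all_goals try simp only [List.concat_eq_append] at *
    · simp at h3
    · have hB' : B' ≠ [] := by
        rintro rfl; simp at h3
      obtain ⟨y, l₂, rfl⟩ := List.exists_cons_of_ne_nil hB'
      refine ⟨(a :: y :: l₂).length, x, y, l₂, ?_⟩
      have := rotate_append (a :: y :: l₂) [x]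
      simpa using this
  · simp only [List.concat_eq_append] at *
    refine ⟨A'.length, x, ?_⟩
    have h1 : (A' ++ [x]) ++ a :: B = A' ++ (x :: a :: B) := by simp
    rw [h1, rotate_append]
    have hne : B ++ A' ≠ [] := by
      rintro hBA'
      have := List.append_eq_nil_iff.mp hBA'
      rcases this with ⟨rfl, rfl⟩
      simp at h3
    obtain ⟨y, l₂, hyl⟩ := List.exists_cons_of_ne_nil hne
    exact ⟨y, l₂, by rw [show x :: a :: B ++ A' = x :: a :: (B ++ A') from by simp, hyl]⟩

lemma etaZ_mul_apply_top (c : ℤ) (M : Matrix (Fin 2) (Fin 2) ℤ) (j : Fin 2) :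
    (etaZ c * M) 0 j = c * M 0 j - M 1 j := by
  simp [etaZ, Matrix.mul_apply, Fin.sum_univ_two]; ring

lemma etaZ_mul_apply_bot (c : ℤ) (M : Matrix (Fin 2) (Fin 2) ℤ) (j : Fin 2) :
    (etaZ c * M) 1 j = M 0 j := by
  simp [etaZ, Matrix.mul_apply, Fin.sum_univ_two]

/-- The column invariant: products of `η(c)` with all `|c| ≥ 2`. -/
lemma big_invariant : ∀ (T : List ℤ), T ≠ [] → (∀ c ∈ T, c ≠ 0 ∧ c ≠ 1 ∧ c ≠ -1) →
    |Pq T 1 0| < |Pq T 0 0| ∧ |Pq T 1 1| < |Pq T 0 1| := by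
  intro T
  induction T with
  | nil => intro h; exact absurd rfl h
  | cons c t ih =>
    intro _ hbig
    have hc : 2 ≤ |c| := by
      obtain ⟨h1, h2, h3⟩ := hbig c List.mem_cons_self
      rw [le_abs]; omega
    have key : ∀ a p : ℤ, |p| < |a| → |a| < |c * a - p| := by
      intro a p hpa
      have h2 : |c*a| - |p| ≤ |c*a - p| := abs_sub_abs_le_abs_sub _ _
      rw [abs_mul] at h2
      nlinarith [abs_nonneg a, abs_nonneg p, mul_le_mul_of_nonneg_right hc (abs_nonneg a)]
    cases t with
    | nil =>
      rw [Pq_cons, Pq_nil, mul_one]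
      constructor
      · show |etaZ c 1 0| < |etaZ c 0 0|
        simp [etaZ]; omega
      · show |etaZ c 1 1| < |etaZ c 0 1|
        simp [etaZ]
    | cons d s =>
      obtain ⟨h1, h2⟩ := ih (by simp) (fun a ha => hbig a (List.mem_cons_of_mem _ ha))
      rw [Pq_cons]
      rw [etaZ_mul_apply_top, etaZ_mul_apply_top, etaZ_mul_apply_bot, etaZ_mul_apply_bot]
      exact ⟨key _ _ h1, key _ _ h2⟩

def Dmat : Matrix (Fin 2) (Fin 2) ℤ := !![1, 0; 0, -1]

lemma Dmat_sq : Dmat * Dmat = 1 := by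
  simp [Dmat, Matrix.mul_fin_two, Matrix.one_fin_two]

lemma etaZ_neg (c : ℤ) : etaZ (-c) = -(Dmat * (etaZ c * Dmat)) := by
  ext i j
  fin_cases i <;> fin_cases j <;>
    simp [etaZ, Dmat, Matrix.mul_apply, Fin.sum_univ_two]

lemma Pq_map_neg (L : List ℤ) :
    Pq (L.map (fun a => -a)) = ((-1 : ℤ)^L.length) • (Dmat * (Pq L * Dmat)) := by
  induction L with
  | nil => simp [Pq_nil, Dmat_sq]
  | cons c t ih =>
    rw [List.map_cons, Pq_cons, ih, Pq_cons, etaZ_neg]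
    rw [List.length_cons, pow_succ]
    rw [mul_smul_comm, neg_mul]
    rw [show Dmat * (etaZ c * Dmat) * (Dmat * (Pq t * Dmat))
          = Dmat * (etaZ c * Pq t * Dmat) from by
      simp only [mul_assoc]
      rw [← mul_assoc Dmat Dmat, Dmat_sq, one_mul]]
    rw [mul_smul, neg_smul, one_smul, smul_neg]

lemma cancel_left {A B C : Matrix (Fin 2) (Fin 2) ℤ} (hAB : A * B = 1) (h : B * C = -1) :
    C = -A := by
  calc C = (A * B) * C := by rw [hAB, one_mul]
  _ = A * (B * C) := mul_assoc _ _ _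
  _ = -A := by rw [h, mul_neg_one]

lemma etaZ_negone_cube : etaZ (-1) * (etaZ (-1) * etaZ (-1)) = 1 := by
  simp [etaZ, Matrix.mul_fin_two, Matrix.one_fin_two]

lemma etaZ_negone_cube' : (etaZ (-1) * etaZ (-1)) * etaZ (-1) = 1 := by
  simp [etaZ, Matrix.mul_fin_two, Matrix.one_fin_two]

lemma neg_etaZ_zero_mul : (-(etaZ 0)) * etaZ 0 = 1 := by
  rw [neg_mul, etaZ_zero_sq, neg_neg]

lemma neg_etaZ_negone_sq : -(etaZ (-1) * etaZ (-1)) = !![0, -1; 1, 1] := by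
  ext i j
  fin_cases i <;> fin_cases j <;> simp [etaZ, Matrix.mul_apply, Fin.sum_univ_two]

lemma neg_etaZ_negone : -(etaZ (-1)) = !![1, 1; -1, 0] := by
  ext i j; fin_cases i <;> fin_cases j <;> simp [etaZ]

lemma etaZ_mul_ne_one (a b : ℤ) : etaZ a * etaZ b ≠ 1 := by
  intro h
  rw [etaZ_mul] at h
  have := congrFun (congrFun h 1) 1
  simp [Matrix.one_apply] at this

/-- contradiction: product of big entries equals 1 -/
lemma contra_one (T : List ℤ) (hne : T ≠ []) (hbig : ∀ c ∈ T, c ≠ 0 ∧ c ≠ 1 ∧ c ≠ -1)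
    (h : Pq T = 1) : False := by
  obtain ⟨_, h2⟩ := big_invariant T hne hbig
  rw [h] at h2
  norm_num [Matrix.one_apply] at h2

lemma contra_negone (T : List ℤ) (hne : T ≠ []) (hbig : ∀ c ∈ T, c ≠ 0 ∧ c ≠ 1 ∧ c ≠ -1)
    (h : Pq T = -1) : False := by
  obtain ⟨_, h2⟩ := big_invariant T hne hbig
  rw [h] at h2
  norm_num [Matrix.one_apply] at h2

/-- contradiction: `0 :: T` with `T` big is a quiddity cycle -/
lemma contra_zero_single (T : List ℤ) (hne : T ≠ []) (hbig : ∀ c ∈ T, c ≠ 0 ∧ c ≠ 1 ∧ c ≠ -1)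
    (h : Pq (0 :: T) = -1) : False := by
  rw [Pq_cons] at h
  have hT : Pq T = -(-(etaZ 0)) := cancel_left neg_etaZ_zero_mul h
  rw [neg_neg] at hT
  obtain ⟨h1, _⟩ := big_invariant T hne hbig
  rw [hT] at h1
  norm_num [etaZ] at h1

lemma contra_zero_pair (T : List ℤ) (hne : T ≠ []) (hbig : ∀ c ∈ T, c ≠ 0 ∧ c ≠ 1 ∧ c ≠ -1)
    (h : Pq (0 :: 0 :: T) = -1) : False := by
  rw [red_zerozero] at h
  exact contra_one T hne hbig (neg_injective h)

lemma contra_negone_single (T : List ℤ) (hne : T ≠ []) (hbig : ∀ c ∈ T, c ≠ 0 ∧ c ≠ 1 ∧ c ≠ -1)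
    (h : Pq ((-1) :: T) = -1) : False := by
  rw [Pq_cons] at h
  have hT : Pq T = -(etaZ (-1) * etaZ (-1)) := cancel_left etaZ_negone_cube' h
  rw [neg_etaZ_negone_sq] at hT
  obtain ⟨h1, _⟩ := big_invariant T hne hbig
  rw [hT] at h1
  norm_num at h1

lemma contra_negone_pair (T : List ℤ) (hne : T ≠ []) (hbig : ∀ c ∈ T, c ≠ 0 ∧ c ≠ 1 ∧ c ≠ -1)
    (h : Pq ((-1) :: (-1) :: T) = -1) : False := by
  rw [Pq_cons, Pq_cons, ← mul_assoc] at h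
  have hT : Pq T = -(etaZ (-1)) := cancel_left etaZ_negone_cube h
  rw [neg_etaZ_negone] at hT
  obtain ⟨h1, _⟩ := big_invariant T hne hbig
  rw [hT] at h1
  norm_num at h1

/-- The disjunctive conclusion of the theorem. -/
def QGoal (l : List ℤ) : Prop :=
    (l = [0, 0] ∨ l = [1, 1, 1]) ∨
    (∃ r < l.length, ∃ l₁ l₂ : List ℤ, ∃ x y : ℤ,
      l.rotate r = l₁ ++ x :: 1 :: y :: l₂ ∧
      IsQuiddityZ (l₁ ++ (x - 1) :: (y - 1) :: l₂)) ∨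
    (Odd l.length ∧ ∃ r < l.length, ∃ l₁ l₂ : List ℤ, ∃ x y : ℤ,
      l.rotate r = l₁ ++ x :: 0 :: y :: l₂ ∧
      IsQuiddityZ ((l₁.map (fun a => -a)) ++ (-x - y) :: (l₂.map (fun a => -a)))) ∨
    (Even l.length ∧ ∃ r < l.length, ∃ l₁ l₂ : List ℤ, ∃ x y : ℤ,
      l.rotate r = l₁ ++ x :: (-1) :: y :: l₂ ∧
      IsQuiddityZ ((l₁.map (fun a => -a)) ++ (-x - 1) :: (-y - 1) :: (l₂.map (fun a => -a)))) ∨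
    (∃ r < l.length,
      (∃ l₁ l₂ l₃ : List ℤ, ∃ x y x' y' : ℤ,
        l.rotate r = l₁ ++ x :: 0 :: y :: l₂ ++ x' :: 0 :: y' :: l₃ ∧
        IsQuiddityZ (l₁ ++ (x + y) :: l₂ ++ (x' + y') :: l₃)) ∨
      (∃ l₁ l₂ : List ℤ, ∃ x y z : ℤ,
        l.rotate r = l₁ ++ x :: 0 :: y :: 0 :: z :: l₂ ∧
        IsQuiddityZ (l₁ ++ (x + y + z) :: l₂))) ∨
    (∃ r < l.length,
      (∃ l₁ l₂ l₃ : List ℤ, ∃ x y x' y' : ℤ,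
        l.rotate r = l₁ ++ x :: (-1) :: y :: l₂ ++ x' :: (-1) :: y' :: l₃ ∧
        IsQuiddityZ (l₁ ++ (x + 1) :: (y + 1) :: l₂ ++ (x' + 1) :: (y' + 1) :: l₃)) ∨
      (∃ l₁ l₂ : List ℤ, ∃ x y z : ℤ,
        l.rotate r = l₁ ++ x :: (-1) :: y :: (-1) :: z :: l₂ ∧
        IsQuiddityZ (l₁ ++ (x + 1) :: (y + 2) :: (z + 1) :: l₂)))

lemma qgoal_case1 {l : List ℤ} (hne : l ≠ []) {n : ℕ} {x y : ℤ} {l₂ : List ℤ}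
    (hrot : l.rotate n = x :: 1 :: y :: l₂)
    (hred : Pq ((x-1) :: (y-1) :: l₂) = -1) : QGoal l := by
  refine Or.inr (Or.inl ⟨n % l.length, Nat.mod_lt _ (List.length_pos_iff.mpr hne),
    [], l₂, x, y, ?_, ?_⟩)
  · rw [List.rotate_mod, hrot]; simp
  · simpa [isQuiddityZ_iff] using hred

lemma qgoal_case2 {l : List ℤ} (hne : l ≠ []) (hodd : Odd l.length) {n : ℕ} {x y : ℤ}
    {l₂ : List ℤ} (hrot : l.rotate n = x :: 0 :: y :: l₂)
    (hred : Pq (((-x) - y) :: l₂.map (fun a => -a)) = -1) : QGoal l := by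
  refine Or.inr (Or.inr (Or.inl ⟨hodd, n % l.length, Nat.mod_lt _ (List.length_pos_iff.mpr hne),
    [], l₂, x, y, ?_, ?_⟩))
  · rw [List.rotate_mod, hrot]; simp
  · simpa [isQuiddityZ_iff] using hred

lemma qgoal_case3 {l : List ℤ} (hne : l ≠ []) (hev : Even l.length) {n : ℕ} {x y : ℤ}
    {l₂ : List ℤ} (hrot : l.rotate n = x :: (-1) :: y :: l₂)
    (hred : Pq (((-x) - 1) :: ((-y) - 1) :: l₂.map (fun a => -a)) = -1) : QGoal l := by
  refine Or.inr (Or.inr (Or.inr (Or.inl ⟨hev, n % l.length,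
    Nat.mod_lt _ (List.length_pos_iff.mpr hne), [], l₂, x, y, ?_, ?_⟩)))
  · rw [List.rotate_mod, hrot]; simp
  · simpa [isQuiddityZ_iff] using hred

lemma qgoal_case4a {l : List ℤ} (hne : l ≠ []) {n : ℕ} {x y x' y' : ℤ} {A B : List ℤ}
    (hrot : l.rotate n = x :: 0 :: y :: (A ++ x' :: 0 :: y' :: B))
    (hred : Pq (((x+y) :: A) ++ (x'+y') :: B) = -1) : QGoal l := by
  refine Or.inr (Or.inr (Or.inr (Or.inr (Or.inl ⟨n % l.length,
    Nat.mod_lt _ (List.length_pos_iff.mpr hne),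
    Or.inl ⟨[], A, B, x, y, x', y', ?_, ?_⟩⟩))))
  · rw [List.rotate_mod, hrot]; simp
  · simpa [isQuiddityZ_iff] using hred

lemma qgoal_case4b {l : List ℤ} (hne : l ≠ []) {n : ℕ} {x y z : ℤ} {B : List ℤ}
    (hrot : l.rotate n = x :: 0 :: y :: 0 :: z :: B)
    (hred : Pq ((x+y+z) :: B) = -1) : QGoal l := by
  refine Or.inr (Or.inr (Or.inr (Or.inr (Or.inl ⟨n % l.length,
    Nat.mod_lt _ (List.length_pos_iff.mpr hne),
    Or.inr ⟨[], B, x, y, z, ?_, ?_⟩⟩))))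
  · rw [List.rotate_mod, hrot]; simp
  · simpa [isQuiddityZ_iff] using hred

lemma qgoal_case5a {l : List ℤ} (hne : l ≠ []) {n : ℕ} {x y x' y' : ℤ} {A B : List ℤ}
    (hrot : l.rotate n = x :: (-1) :: y :: (A ++ x' :: (-1) :: y' :: B))
    (hred : Pq (((x+1) :: (y+1) :: A) ++ (x'+1) :: (y'+1) :: B) = -1) : QGoal l := by
  refine Or.inr (Or.inr (Or.inr (Or.inr (Or.inr ⟨n % l.length,
    Nat.mod_lt _ (List.length_pos_iff.mpr hne),
    Or.inl ⟨[], A, B, x, y, x', y', ?_, ?_⟩⟩))))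
  · rw [List.rotate_mod, hrot]; simp
  · simpa [isQuiddityZ_iff] using hred

lemma qgoal_case5b {l : List ℤ} (hne : l ≠ []) {n : ℕ} {x y z : ℤ} {B : List ℤ}
    (hrot : l.rotate n = x :: (-1) :: y :: (-1) :: z :: B)
    (hred : Pq ((x+1) :: (y+2) :: (z+1) :: B) = -1) : QGoal l := by
  refine Or.inr (Or.inr (Or.inr (Or.inr (Or.inr ⟨n % l.length,
    Nat.mod_lt _ (List.length_pos_iff.mpr hne),
    Or.inr ⟨[], B, x, y, z, ?_, ?_⟩⟩))))
  · rw [List.rotate_mod, hrot]; simp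
  · simpa [isQuiddityZ_iff] using hred
-- EVEN branch, -1 ∉ l, with a zero; to be inlined later.  Standalone test lemma:
lemma even_zero_branch (l : List ℤ) (h : IsQuiddityZ l) (hm : 4 ≤ l.length)
    (hne : l ≠ []) (hev : Even l.length)
    (hb : ∀ c ∈ l, c ≠ 1 ∧ c ≠ -1) (h0 : (0:ℤ) ∈ l) : QGoal l := by
  obtain ⟨n, x, y, l₂, hrot⟩ := exists_rotate_mid h0 (by omega)
  have hlen := congrArg List.length hrot
  simp at hlen
  have hq : Pq (x :: 0 :: y :: l₂) = -1 := by
    rw [← hrot]; exact quiddity_rotate h n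
  have hmem : ∀ c, c ∈ x :: 0 :: y :: l₂ → c ∈ l := by
    intro c hc; rw [← hrot] at hc; exact (List.mem_rotate).mp hc
  rcases Nat.lt_or_ge l.length 5 with h4 | h5
  · -- length 4 : contradiction
    have hl2 : l₂.length = 1 := by omega
    obtain ⟨c, rfl⟩ := List.length_eq_one_iff.mp hl2
    rw [red_zero] at hq
    have h2 : Pq ((x+y) :: [c]) = 1 := neg_inj.mp hq
    rw [Pq_cons, Pq_cons, Pq_nil, mul_one] at h2
    exact absurd h2 (etaZ_mul_ne_one _ _)
  · -- length ≥ 6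
    have hl3 : 3 ≤ l₂.length := by
      rcases hev with ⟨k, hk⟩; omega
    rcases List.eq_nil_or_concat l₂ with rfl | ⟨L, w, rfl⟩
    · simp at hl3
    simp only [List.concat_eq_append] at hrot hq hmem hlen hl3
    by_cases hz : (0:ℤ) ∈ L
    · -- second zero in the "middle": case (4)
      obtain ⟨Pp, Q, rfl⟩ := List.append_of_mem hz
      obtain ⟨y', l₃, hQ⟩ := List.exists_cons_of_ne_nil (show Q ++ [w] ≠ [] by simp)
      rcases List.eq_nil_or_concat Pp with rfl | ⟨P₁, x', rfl⟩
      · -- adjacent-at-distance-2: 2nd alternative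
        have hrot' : l.rotate n = x :: 0 :: y :: 0 :: y' :: l₃ := by
          rw [hrot]
          simp only [List.nil_append, List.cons_append, List.append_assoc]
          rw [hQ]
        have hq' : Pq (x :: 0 :: y :: 0 :: y' :: l₃) = -1 := by
          rw [← hrot']; exact quiddity_rotate h n
        rw [red_zero5] at hq'
        exact qgoal_case4b hne hrot' hq'
      · -- 1st alternative
        simp only [List.concat_eq_append] at hrot hq
        have hrot' : l.rotate n = x :: 0 :: y :: (P₁ ++ x' :: 0 :: y' :: l₃) := by
          rw [hrot]
          simp only [List.cons_append, List.append_assoc, List.singleton_append,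
            List.nil_append]
          rw [hQ]
        have hq' : Pq (x :: 0 :: y :: (P₁ ++ x' :: 0 :: y' :: l₃)) = -1 := by
          rw [← hrot']; exact quiddity_rotate h n
        rw [red_zero_two] at hq'
        exact qgoal_case4a hne hrot' hq'
    · by_cases hw : w = 0
      · -- last entry of l₂ is zero: rotate to get 2nd alternative
        subst hw
        have hLne : L ≠ [] := by
          intro e; rw [e] at hl3; simp at hl3
        obtain ⟨L', v, rfl⟩ := (List.eq_nil_or_concat L).resolve_left hLne
        simp only [List.concat_eq_append] at hrot hq hmem hlen hl3 hz
        have hrot' : l.rotate (n + (x :: 0 :: y :: L').length) = v :: 0 :: x :: 0 :: y :: L' := by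
          rw [← List.rotate_rotate, hrot,
            show x :: 0 :: y :: ((L' ++ [v]) ++ [0]) = (x :: 0 :: y :: L') ++ [v, 0] by simp,
            rotate_append]
          simp
        have hq' : Pq (v :: 0 :: x :: 0 :: y :: L') = -1 := by
          rw [← hrot']; exact quiddity_rotate h _
        rw [red_zero5] at hq'
        exact qgoal_case4b hne hrot' hq'
      · by_cases hy : y = 0
        · subst hy
          by_cases hx : x = 0
          · -- triple zero cluster: rotate to 2nd alternative
            subst hx
            obtain ⟨z, l₃, hL⟩ := List.exists_cons_of_ne_nil
              (show L ≠ [] by intro e; rw [e] at hl3; simp at hl3)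
            have hrot' : l.rotate (n + (0 :: 0 :: 0 :: L).length)
                = w :: 0 :: 0 :: 0 :: z :: l₃ := by
              rw [← List.rotate_rotate, hrot,
                show (0:ℤ) :: 0 :: 0 :: (L ++ [w]) = (0 :: 0 :: 0 :: L) ++ [w] by simp,
                rotate_append]
              simp [hL]
            have hq' : Pq (w :: 0 :: 0 :: 0 :: z :: l₃) = -1 := by
              rw [← hrot']; exact quiddity_rotate h _
            rw [red_zero5] at hq'
            exact qgoal_case4b hne hrot' hq'
          · -- exactly the adjacent pair (positions 2,3): contradiction
            have hrot' : l.rotate (n + 1) = 0 :: 0 :: ((L ++ [w]) ++ [x]) := by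
              rw [← List.rotate_rotate, hrot,
                show x :: 0 :: 0 :: (L ++ [w]) = [x] ++ (0 :: 0 :: (L ++ [w])) by simp,
                show (1:ℕ) = [x].length from rfl, rotate_append]
              simp
            have hq' : Pq ((0:ℤ) :: 0 :: ((L ++ [w]) ++ [x])) = -1 := by
              rw [← hrot']; exact quiddity_rotate h _
            refine (contra_zero_pair _ (by simp) ?_ hq').elim
            intro c hc
            have hcl : c ∈ l := by
              apply hmem
              simp only [List.mem_cons, List.mem_append, List.mem_singleton,
                List.not_mem_nil, or_false] at hc ⊢
              tauto
            have hc0 : c ≠ 0 := by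
              rintro rfl
              simp only [List.mem_cons, List.mem_append, List.mem_singleton,
                List.not_mem_nil, or_false] at hc
              rcases hc with (hc | hc) | hc
              · exact hz hc
              · exact hw hc.symm
              · exact hx hc.symm
            exact ⟨hc0, (hb c hcl).1, (hb c hcl).2⟩
        · by_cases hx : x = 0
          · -- adjacent pair at positions 1,2: contradiction
            subst hx
            have hq' : Pq ((0:ℤ) :: 0 :: (y :: (L ++ [w]))) = -1 := hq
            refine (contra_zero_pair _ (by simp) ?_ hq').elim
            intro c hc
            have hcl : c ∈ l := by
              apply hmem
              simp only [List.mem_cons, List.mem_append, List.mem_singleton,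
                List.not_mem_nil, or_false] at hc ⊢
              tauto
            have hc0 : c ≠ 0 := by
              rintro rfl
              simp only [List.mem_cons, List.mem_append, List.mem_singleton,
                List.not_mem_nil, or_false] at hc
              rcases hc with hc | hc | hc
              · exact hy hc.symm
              · exact hz hc
              · exact hw hc.symm
            exact ⟨hc0, (hb c hcl).1, (hb c hcl).2⟩
          · -- single zero: contradiction
            have hrot' : l.rotate (n + 1) = 0 :: (y :: ((L ++ [w]) ++ [x])) := by
              rw [← List.rotate_rotate, hrot,
                show x :: 0 :: y :: (L ++ [w]) = [x] ++ (0 :: y :: (L ++ [w])) by simp,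
                show (1:ℕ) = [x].length from rfl, rotate_append]
              simp
            have hq' : Pq ((0:ℤ) :: (y :: ((L ++ [w]) ++ [x]))) = -1 := by
              rw [← hrot']; exact quiddity_rotate h _
            refine (contra_zero_single _ (by simp) ?_ hq').elim
            intro c hc
            have hcl : c ∈ l := by
              apply hmem
              simp only [List.mem_cons, List.mem_append, List.mem_singleton,
                List.not_mem_nil, or_false] at hc ⊢
              tauto
            have hc0 : c ≠ 0 := by
              rintro rfl
              simp only [List.mem_cons, List.mem_append, List.mem_singleton,
                List.not_mem_nil, or_false] at hc
              rcases hc with hc | (hc | hc) | hc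
              · exact hy hc.symm
              · exact hz hc
              · exact hw hc.symm
              · exact hx hc.symm
            exact ⟨hc0, (hb c hcl).1, (hb c hcl).2⟩
lemma odd_negone_branch (l : List ℤ) (h : IsQuiddityZ l) (hm : 4 ≤ l.length)
    (hne : l ≠ []) (hodd : Odd l.length)
    (hb : ∀ c ∈ l, c ≠ 0 ∧ c ≠ 1) (hn1 : (-1:ℤ) ∈ l) : QGoal l := by
  obtain ⟨n, x, y, l₂, hrot⟩ := exists_rotate_mid hn1 (by omega)
  have hlen := congrArg List.length hrot
  simp at hlen
  have hq : Pq (x :: (-1) :: y :: l₂) = -1 := by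
    rw [← hrot]; exact quiddity_rotate h n
  have hmem : ∀ c, c ∈ x :: (-1) :: y :: l₂ → c ∈ l := by
    intro c hc; rw [← hrot] at hc; exact (List.mem_rotate).mp hc
  have h5 : 5 ≤ l.length := by
    rcases hodd with ⟨k, hk⟩; omega
  have hl3 : 2 ≤ l₂.length := by omega
  rcases List.eq_nil_or_concat l₂ with rfl | ⟨L, w, rfl⟩
  · simp at hl3
  simp only [List.concat_eq_append] at hrot hq hmem hlen hl3
  by_cases hz : (-1:ℤ) ∈ L
  · -- second -1 in the middle: case (5)
    obtain ⟨Pp, Q, rfl⟩ := List.append_of_mem hz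
    obtain ⟨y', l₃, hQ⟩ := List.exists_cons_of_ne_nil (show Q ++ [w] ≠ [] by simp)
    rcases List.eq_nil_or_concat Pp with rfl | ⟨P₁, x', rfl⟩
    · -- distance 2 : 2nd alternative
      have hrot' : l.rotate n = x :: (-1) :: y :: (-1) :: y' :: l₃ := by
        rw [hrot]
        simp only [List.nil_append, List.cons_append, List.append_assoc]
        rw [hQ]
      have hq' : Pq (x :: (-1) :: y :: (-1) :: y' :: l₃) = -1 := by
        rw [← hrot']; exact quiddity_rotate h n
      rw [red_negone5] at hq'
      exact qgoal_case5b hne hrot' hq'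
    · -- 1st alternative
      simp only [List.concat_eq_append] at hrot hq
      have hrot' : l.rotate n = x :: (-1) :: y :: (P₁ ++ x' :: (-1) :: y' :: l₃) := by
        rw [hrot]
        simp only [List.cons_append, List.append_assoc, List.singleton_append,
          List.nil_append]
        rw [hQ]
      have hq' : Pq (x :: (-1) :: y :: (P₁ ++ x' :: (-1) :: y' :: l₃)) = -1 := by
        rw [← hrot']; exact quiddity_rotate h n
      rw [red_negone_two] at hq'
      exact qgoal_case5a hne hrot' hq'
  · by_cases hw : w = -1
    · -- last entry of l₂ is -1 : rotate, 2nd alternative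
      subst hw
      have hLne : L ≠ [] := by
        intro e; rw [e] at hl3; simp at hl3
      obtain ⟨L', v, rfl⟩ := (List.eq_nil_or_concat L).resolve_left hLne
      simp only [List.concat_eq_append] at hrot hq hmem hlen hl3 hz
      have hrot' : l.rotate (n + (x :: (-1) :: y :: L').length)
          = v :: (-1) :: x :: (-1) :: y :: L' := by
        rw [← List.rotate_rotate, hrot,
          show x :: (-1) :: y :: ((L' ++ [v]) ++ [-1]) = (x :: (-1) :: y :: L') ++ [v, -1] by simp,
          rotate_append]
        simp
      have hq' : Pq (v :: (-1) :: x :: (-1) :: y :: L') = -1 := by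
        rw [← hrot']; exact quiddity_rotate h _
      rw [red_negone5] at hq'
      exact qgoal_case5b hne hrot' hq'
    · by_cases hy : y = -1
      · subst hy
        by_cases hx : x = -1
        · -- triple cluster: rotate, 2nd alternative
          subst hx
          obtain ⟨z, l₃, hL⟩ := List.exists_cons_of_ne_nil
            (show L ≠ [] by intro e; rw [e] at hl3; simp at hl3)
          have hrot' : l.rotate (n + ((-1) :: (-1) :: (-1) :: L).length)
              = w :: (-1) :: (-1) :: (-1) :: z :: l₃ := by
            rw [← List.rotate_rotate, hrot,
              show (-1:ℤ) :: (-1) :: (-1) :: (L ++ [w]) = ((-1) :: (-1) :: (-1) :: L) ++ [w] by simp,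
              rotate_append]
            simp [hL]
          have hq' : Pq (w :: (-1) :: (-1) :: (-1) :: z :: l₃) = -1 := by
            rw [← hrot']; exact quiddity_rotate h _
          rw [red_negone5] at hq'
          exact qgoal_case5b hne hrot' hq'
        · -- adjacent pair at positions 2,3: contradiction
          have hrot' : l.rotate (n + 1) = (-1) :: (-1) :: ((L ++ [w]) ++ [x]) := by
            rw [← List.rotate_rotate, hrot,
              show x :: (-1) :: (-1) :: (L ++ [w]) = [x] ++ ((-1) :: (-1) :: (L ++ [w])) by simp,
              show (1:ℕ) = [x].length from rfl, rotate_append]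
            simp
          have hq' : Pq ((-1:ℤ) :: (-1) :: ((L ++ [w]) ++ [x])) = -1 := by
            rw [← hrot']; exact quiddity_rotate h _
          refine ((contra_negone_pair _ (by simp) ?_ hq').elim : QGoal l)
          intro c hc
          have hcl : c ∈ l := by
            apply hmem
            simp only [List.mem_cons, List.mem_append, List.mem_singleton,
              List.not_mem_nil, or_false] at hc ⊢
            tauto
          have hcn : c ≠ -1 := by
            rintro rfl
            simp only [List.mem_cons, List.mem_append, List.mem_singleton,
              List.not_mem_nil, or_false] at hc
            rcases hc with (hc | hc) | hc
            · exact hz hc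
            · exact hw hc.symm
            · exact hx hc.symm
          exact ⟨(hb c hcl).1, (hb c hcl).2, hcn⟩
      · by_cases hx : x = -1
        · -- adjacent pair at positions 1,2: contradiction
          subst hx
          have hq' : Pq ((-1:ℤ) :: (-1) :: (y :: (L ++ [w]))) = -1 := hq
          refine ((contra_negone_pair _ (by simp) ?_ hq').elim : QGoal l)
          intro c hc
          have hcl : c ∈ l := by
            apply hmem
            simp only [List.mem_cons, List.mem_append, List.mem_singleton,
              List.not_mem_nil, or_false] at hc ⊢
            tauto
          have hcn : c ≠ -1 := by
            rintro rfl
            simp only [List.mem_cons, List.mem_append, List.mem_singleton,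
              List.not_mem_nil, or_false] at hc
            rcases hc with hc | hc | hc
            · exact hy hc.symm
            · exact hz hc
            · exact hw hc.symm
          exact ⟨(hb c hcl).1, (hb c hcl).2, hcn⟩
        · -- single -1 : contradiction
          have hrot' : l.rotate (n + 1) = (-1) :: (y :: ((L ++ [w]) ++ [x])) := by
            rw [← List.rotate_rotate, hrot,
              show x :: (-1) :: y :: (L ++ [w]) = [x] ++ ((-1) :: y :: (L ++ [w])) by simp,
              show (1:ℕ) = [x].length from rfl, rotate_append]
            simp
          have hq' : Pq ((-1:ℤ) :: (y :: ((L ++ [w]) ++ [x]))) = -1 := by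
            rw [← hrot']; exact quiddity_rotate h _
          refine ((contra_negone_single _ (by simp) ?_ hq').elim : QGoal l)
          intro c hc
          have hcl : c ∈ l := by
            apply hmem
            simp only [List.mem_cons, List.mem_append, List.mem_singleton,
              List.not_mem_nil, or_false] at hc ⊢
            tauto
          have hcn : c ≠ -1 := by
            rintro rfl
            simp only [List.mem_cons, List.mem_append, List.mem_singleton,
              List.not_mem_nil, or_false] at hc
            rcases hc with hc | (hc | hc) | hc
            · exact hy hc.symm
            · exact hz hc
            · exact hw hc.symm
            · exact hx hc.symm
          exact ⟨(hb c hcl).1, (hb c hcl).2, hcn⟩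
lemma even_negone_branch (l : List ℤ) (h : IsQuiddityZ l) (hm : 4 ≤ l.length)
    (hne : l ≠ []) (hev : Even l.length) (hn1 : (-1:ℤ) ∈ l) : QGoal l := by
  obtain ⟨n, x, y, l₂, hrot⟩ := exists_rotate_mid hn1 (by omega)
  have hlen := congrArg List.length hrot
  simp at hlen
  have hq : Pq (x :: (-1) :: y :: l₂) = -1 := by
    rw [← hrot]; exact quiddity_rotate h n
  rw [red_negone] at hq
  have hq1 : Pq ((x+1) :: (y+1) :: l₂) = 1 := neg_inj.mp hq
  apply qgoal_case3 hne hev hrot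
  have e : ((-x) - 1) :: ((-y) - 1) :: l₂.map (fun a => -a)
      = ((x+1) :: (y+1) :: l₂).map (fun a => -a) := by
    simp only [List.map_cons, List.cons.injEq]
    exact ⟨by ring, by ring, trivial⟩
  rw [e, Pq_map_neg, hq1, one_mul, Dmat_sq]
  have hodd2 : Odd ((x+1) :: (y+1) :: l₂).length := by
    simp only [List.length_cons]
    rw [Nat.odd_iff]
    rw [Nat.even_iff] at hev
    omega
  rw [Odd.neg_one_pow hodd2, neg_smul, one_smul]

lemma odd_zero_branch (l : List ℤ) (h : IsQuiddityZ l) (hm : 4 ≤ l.length)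
    (hne : l ≠ []) (hodd : Odd l.length) (h0 : (0:ℤ) ∈ l) : QGoal l := by
  obtain ⟨n, x, y, l₂, hrot⟩ := exists_rotate_mid h0 (by omega)
  have hlen := congrArg List.length hrot
  simp at hlen
  have hq : Pq (x :: 0 :: y :: l₂) = -1 := by
    rw [← hrot]; exact quiddity_rotate h n
  rw [red_zero] at hq
  have hq1 : Pq ((x+y) :: l₂) = 1 := neg_inj.mp hq
  apply qgoal_case2 hne hodd hrot
  have e : ((-x) - y) :: l₂.map (fun a => -a) = ((x+y) :: l₂).map (fun a => -a) := by
    simp only [List.map_cons, List.cons.injEq]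
    exact ⟨by ring, trivial⟩
  rw [e, Pq_map_neg, hq1, one_mul, Dmat_sq]
  have hodd2 : Odd ((x+y) :: l₂).length := by
    simp only [List.length_cons]
    rw [Nat.odd_iff]
    rw [Nat.odd_iff] at hodd
    omega
  rw [Odd.neg_one_pow hodd2, neg_smul, one_smul]

lemma main4 (l : List ℤ) (h : IsQuiddityZ l) (hm : 4 ≤ l.length) : QGoal l := by
  have hne : l ≠ [] := by
    intro e; rw [e] at hm; simp at hm
  by_cases h1 : (1:ℤ) ∈ l
  · obtain ⟨n, x, y, l₂, hrot⟩ := exists_rotate_mid h1 (by omega)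
    have hq : Pq (x :: 1 :: y :: l₂) = -1 := by
      rw [← hrot]; exact quiddity_rotate h n
    rw [red_one] at hq
    exact qgoal_case1 hne hrot hq
  · rcases Nat.even_or_odd l.length with hev | hodd
    · by_cases hn1 : (-1:ℤ) ∈ l
      · exact even_negone_branch l h hm hne hev hn1
      · by_cases h0 : (0:ℤ) ∈ l
        · exact even_zero_branch l h hm hne hev
            (fun c hc => ⟨fun e => h1 (e ▸ hc), fun e => hn1 (e ▸ hc)⟩) h0
        · exact (contra_negone l hne
            (fun c hc => ⟨fun e => h0 (e ▸ hc), fun e => h1 (e ▸ hc), fun e => hn1 (e ▸ hc)⟩)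
            h).elim
    · by_cases h0 : (0:ℤ) ∈ l
      · exact odd_zero_branch l h hm hne hodd h0
      · by_cases hn1 : (-1:ℤ) ∈ l
        · exact odd_negone_branch l h hm hne hodd
            (fun c hc => ⟨fun e => h0 (e ▸ hc), fun e => h1 (e ▸ hc)⟩) hn1
        · exact (contra_negone l hne
            (fun c hc => ⟨fun e => h0 (e ▸ hc), fun e => h1 (e ▸ hc), fun e => hn1 (e ▸ hc)⟩)
            h).elim
theorem stmt19' (l : List ℤ) (h : IsQuiddityZ l) : QGoal l := by
  rcases Nat.lt_or_ge l.length 4 with h4 | h4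
  · rcases l with _ | ⟨a, _ | ⟨b, _ | ⟨c, _ | ⟨d, t⟩⟩⟩⟩
    · -- []
      have h' : Pq [] = -1 := h
      rw [Pq_nil] at h'
      have := congrFun (congrFun h' 0) 0
      simp [Matrix.one_apply] at this
    · -- [a]
      have h' : Pq [a] = -1 := h
      rw [Pq_cons, Pq_nil, mul_one] at h'
      have := congrFun (congrFun h' 1) 0
      simp [etaZ, Matrix.one_apply] at this
    · -- [a, b]
      have h' : Pq [a, b] = -1 := h
      rw [Pq_cons, Pq_cons, Pq_nil, mul_one, etaZ_mul] at h'
      have e01 := congrFun (congrFun h' 0) 1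
      have e10 := congrFun (congrFun h' 1) 0
      simp [Matrix.one_apply] at e01 e10
      subst e01; subst e10
      exact Or.inl (Or.inl rfl)
    · -- [a, b, c]
      have h' : Pq [a, b, c] = -1 := h
      rw [Pq_cons, Pq_cons, Pq_cons, Pq_nil, mul_one] at h'
      have e11 := congrFun (congrFun h' 1) 1
      have e01 := congrFun (congrFun h' 0) 1
      have e10 := congrFun (congrFun h' 1) 0
      simp [etaZ, Matrix.mul_apply, Fin.sum_univ_two, Matrix.one_apply] at e11 e01 e10
      -- e11 : -b = -1, e01 : -(a*b - 1)?  we'll see; finish by omega-style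
      have hb : b = 1 := by omega
      subst hb
      have ha : a = 1 := by
        simp at e01; omega
      have hc : c = 1 := by omega
      subst ha; subst hc
      exact Or.inl (Or.inr rfl)
    · simp at h4; omega
  · exact main4 l h h4

/-- Every quiddity cycle over `ℤ` is `(0,0)` or `(1,1,1)`, or admits (after a cyclic
rotation) one of the reductions (1)–(5) of Theorem 5.5. A decomposition
`l.rotate r = l₁ ++ x :: e :: y :: l₂` expresses that after rotation the entry `e` sits at
a position `k` with `2 ≤ k ≤ m − 1` and neighbours `x = d_{k−1}`, `y = d_{k+1}`; the two
distinguished entries of cases (4) and (5) sit at positions `j < k` with `k − j > 2`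
(first alternative) or `k = j + 2` (second alternative). -/
theorem stmt19 (l : List ℤ) (h : IsQuiddityZ l) :
    (l = [0, 0] ∨ l = [1, 1, 1]) ∨
    (∃ r < l.length, ∃ l₁ l₂ : List ℤ, ∃ x y : ℤ,
      l.rotate r = l₁ ++ x :: 1 :: y :: l₂ ∧
      IsQuiddityZ (l₁ ++ (x - 1) :: (y - 1) :: l₂)) ∨
    (Odd l.length ∧ ∃ r < l.length, ∃ l₁ l₂ : List ℤ, ∃ x y : ℤ,
      l.rotate r = l₁ ++ x :: 0 :: y :: l₂ ∧
      IsQuiddityZ ((l₁.map (fun a => -a)) ++ (-x - y) :: (l₂.map (fun a => -a)))) ∨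
    (Even l.length ∧ ∃ r < l.length, ∃ l₁ l₂ : List ℤ, ∃ x y : ℤ,
      l.rotate r = l₁ ++ x :: (-1) :: y :: l₂ ∧
      IsQuiddityZ ((l₁.map (fun a => -a)) ++ (-x - 1) :: (-y - 1) :: (l₂.map (fun a => -a)))) ∨
    (∃ r < l.length,
      (∃ l₁ l₂ l₃ : List ℤ, ∃ x y x' y' : ℤ,
        l.rotate r = l₁ ++ x :: 0 :: y :: l₂ ++ x' :: 0 :: y' :: l₃ ∧
        IsQuiddityZ (l₁ ++ (x + y) :: l₂ ++ (x' + y') :: l₃)) ∨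
      (∃ l₁ l₂ : List ℤ, ∃ x y z : ℤ,
        l.rotate r = l₁ ++ x :: 0 :: y :: 0 :: z :: l₂ ∧
        IsQuiddityZ (l₁ ++ (x + y + z) :: l₂))) ∨
    (∃ r < l.length,
      (∃ l₁ l₂ l₃ : List ℤ, ∃ x y x' y' : ℤ,
        l.rotate r = l₁ ++ x :: (-1) :: y :: l₂ ++ x' :: (-1) :: y' :: l₃ ∧
        IsQuiddityZ (l₁ ++ (x + 1) :: (y + 1) :: l₂ ++ (x' + 1) :: (y' + 1) :: l₃)) ∨
      (∃ l₁ l₂ : List ℤ, ∃ x y z : ℤ,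
        l.rotate r = l₁ ++ x :: (-1) :: y :: (-1) :: z :: l₂ ∧
        IsQuiddityZ (l₁ ++ (x + 1) :: (y + 2) :: (z + 1) :: l₂))) := stmt19' l h
end
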